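/- Let G be a colored graph with tuples ā, ā', b̄, b̄' such that dist(ā, ā') > 2^k and dist(b̄, b̄') > 2^k. Then Duplicator wins the k-round local EF-game from position (G, ā ā', b̄ b̄') if and only if she wins both the k-round local EF-game from (G, ā, b̄) and from (G, ā', b̄'). -/

import Mathlib

variable {V : Type*} {κ : Type*}

/-- `x` lies in the closed `r`-ball around `c` in `G`. -/
def inBall (G : SimpleGraph V) (c : V) (r : ℕ) (x : V) : Prop :=
  ∃ p : G.Walk c x, p.length ≤ r

/-- `x` lies in the closed `r`-ball around the tuple `a` in `G`. -/
def inBallT (G : SimpleGraph V) {n : ℕ} (a : Fin n → V) (r : ℕ) (x : V) : Prop :=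
  ∃ i, inBall G (a i) r x

/-- The tuples `a` and `b` define a partial automorphism of `(G, col)`. -/
def IsPartialAuto (G : SimpleGraph V) (col : V → κ → Prop) {n : ℕ}
    (a b : Fin n → V) : Prop :=
  ∀ i j : Fin n,
    (a i = a j ↔ b i = b j) ∧ (∀ c, col (a i) c ↔ col (b i) c) ∧
    (G.Adj (a i) (a j) ↔ G.Adj (b i) (b j))

/-- Duplicator has a winning strategy in the `k`-round *local* EF-game on
`(G, col)` from position `(G, a, b, k)`: with `j+1` rounds remaining, a-moves
are restricted to `N_{2^j}[ā]` and b-moves to `N_{2^j}[b̄]`. -/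
def DWinsLocal (G : SimpleGraph V) (col : V → κ → Prop) :
    (k : ℕ) → {n : ℕ} → (Fin n → V) → (Fin n → V) → Prop
  | 0, _, a, b => IsPartialAuto G col a b
  | (k + 1), _, a, b =>
      (∀ x : V, inBallT G a (2 ^ k) x → ∃ y : V, inBallT G b (2 ^ k) y ∧
        DWinsLocal G col k (Fin.snoc a x) (Fin.snoc b y)) ∧
      (∀ y : V, inBallT G b (2 ^ k) y → ∃ x : V, inBallT G a (2 ^ k) x ∧
        DWinsLocal G col k (Fin.snoc a x) (Fin.snoc b y))

/-- If `dist(ā, ā') > 2^k` and `dist(b̄, b̄') > 2^k`, then Duplicator wins the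
`k`-round local EF-game on the concatenated tuples iff she wins it on both
pairs of tuples separately. -/
lemma inBall_refl (G : SimpleGraph V) (c : V) (r : ℕ) : inBall G c r c :=
  ⟨SimpleGraph.Walk.nil, by simp⟩

lemma inBall_of_eq {G : SimpleGraph V} {u v : V} {r : ℕ} (h : u = v) : inBall G u r v := by
  subst h; exact inBall_refl G u r

lemma inBall_mono {G : SimpleGraph V} {c x : V} {r r' : ℕ} (h : r ≤ r') :
    inBall G c r x → inBall G c r' x := fun ⟨p, hp⟩ => ⟨p, hp.trans h⟩

lemma inBall_symm {G : SimpleGraph V} {c x : V} {r : ℕ} :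
    inBall G c r x → inBall G x r c := fun ⟨p, hp⟩ => ⟨p.reverse, by simpa⟩

lemma inBall_trans {G : SimpleGraph V} {c x y : V} {r s : ℕ}
    (h1 : inBall G c r x) (h2 : inBall G x s y) : inBall G c (r + s) y := by
  obtain ⟨p, hp⟩ := h1; obtain ⟨q, hq⟩ := h2
  exact ⟨p.append q, by rw [SimpleGraph.Walk.length_append]; omega⟩

lemma inBall_one {G : SimpleGraph V} {u v : V} :
    inBall G u 1 v ↔ u = v ∨ G.Adj u v := by
  constructor
  · rintro ⟨p, hp⟩
    cases p with
    | nil => exact Or.inl rfl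
    | cons h q =>
      cases q with
      | nil => exact Or.inr h
      | cons h' q' => simp [SimpleGraph.Walk.length_cons] at hp
  · rintro (rfl | h)
    · exact inBall_refl G u 1
    · exact ⟨SimpleGraph.Walk.cons h SimpleGraph.Walk.nil, by simp⟩

lemma inBall_split {G : SimpleGraph V} (r s : ℕ) :
    ∀ {u v : V} (p : G.Walk u v), p.length ≤ r + s →
      ∃ x, inBall G u r x ∧ inBall G x s v := by
  induction r with
  | zero => exact fun p hp => ⟨_, inBall_refl G _ 0, ⟨p, by omega⟩⟩
  | succ r ih =>
    intro u v p hp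
    cases p with
    | nil => exact ⟨u, inBall_refl _ _ _, inBall_refl _ _ _⟩
    | cons h q =>
      simp only [SimpleGraph.Walk.length_cons] at hp
      obtain ⟨x, h1, h2⟩ := ih q (by omega)
      obtain ⟨p', hp'⟩ := h1
      exact ⟨x, ⟨SimpleGraph.Walk.cons h p', by simp; omega⟩, h2⟩

lemma dwins_symm (G : SimpleGraph V) (col : V → κ → Prop) :
    ∀ (k : ℕ) {n : ℕ} {a b : Fin n → V}, DWinsLocal G col k a b → DWinsLocal G col k b a := by
  intro k
  induction k with
  | zero =>
    intro n a b h i j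
    exact ⟨(h i j).1.symm, fun c => ((h i j).2.1 c).symm, (h i j).2.2.symm⟩
  | succ k ih =>
    intro n a b h
    exact ⟨fun x hx => let ⟨y, hy, hw⟩ := h.2 x hx; ⟨y, hy, ih hw⟩,
           fun y hy => let ⟨x, hx, hw⟩ := h.1 y hy; ⟨x, hx, ih hw⟩⟩

lemma dwins_reindex (G : SimpleGraph V) (col : V → κ → Prop) :
    ∀ (k : ℕ) {n n' : ℕ} (e : Fin n' → Fin n), Function.Surjective e →
      ∀ {a b : Fin n → V}, DWinsLocal G col k a b →
        DWinsLocal G col k (a ∘ e) (b ∘ e) := by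
  intro k
  induction k with
  | zero => intro n n' e he a b h i j; exact h (e i) (e j)
  | succ k ih =>
    intro n n' e he a b h
    have hE : Function.Surjective
        (Fin.snoc (Fin.castSucc ∘ e) (Fin.last n) : Fin (n' + 1) → Fin (n + 1)) := by
      intro q
      induction q using Fin.lastCases with
      | last => exact ⟨Fin.last n', by simp⟩
      | cast i =>
        obtain ⟨i', rfl⟩ := he i
        exact ⟨i'.castSucc, by simp⟩
    have hcomp : ∀ (a : Fin n → V) (x : V),
        (Fin.snoc a x : Fin (n + 1) → V) ∘
            (Fin.snoc (Fin.castSucc ∘ e) (Fin.last n) : Fin (n' + 1) → Fin (n + 1))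
          = Fin.snoc (a ∘ e) x := by
      intro a x
      funext p
      induction p using Fin.lastCases with
      | last => simp
      | cast i => simp
    constructor
    · intro x hx
      obtain ⟨i, hi⟩ := hx
      obtain ⟨y, hy, hw⟩ := h.1 x ⟨e i, hi⟩
      obtain ⟨j, hj⟩ := hy
      obtain ⟨j', rfl⟩ := he j
      refine ⟨y, ⟨j', hj⟩, ?_⟩
      have := ih _ hE hw
      rwa [hcomp, hcomp] at this
    · intro y hy
      obtain ⟨i, hi⟩ := hy
      obtain ⟨x, hx, hw⟩ := h.2 y ⟨e i, hi⟩
      obtain ⟨j, hj⟩ := hx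
      obtain ⟨j', rfl⟩ := he j
      refine ⟨x, ⟨j', hj⟩, ?_⟩
      have := ih _ hE hw
      rwa [hcomp, hcomp] at this

lemma dwins_ball (G : SimpleGraph V) (col : V → κ → Prop) :
    ∀ (k : ℕ) {n : ℕ} {a b : Fin n → V}, DWinsLocal G col k a b →
      ∀ i j, inBall G (a i) (2 ^ k) (a j) → inBall G (b i) (2 ^ k) (b j) := by
  intro k
  induction k with
  | zero =>
    intro n a b h i j hij
    rw [pow_zero] at *
    rcases inBall_one.1 hij with heq | hadj
    · exact inBall_one.2 (Or.inl ((h i j).1.1 heq))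
    · exact inBall_one.2 (Or.inr ((h i j).2.2.1 hadj))
  | succ k ih =>
    intro n a b h i j hij
    obtain ⟨p, hp⟩ := hij
    have h2 : (2:ℕ) ^ (k + 1) = 2 ^ k + 2 ^ k := by rw [pow_succ, mul_two]
    obtain ⟨x, hx1, hx2⟩ := inBall_split (2 ^ k) (2 ^ k) p (by omega)
    obtain ⟨y, hy, hw⟩ := h.1 x ⟨i, hx1⟩
    have hbiy : inBall G (b i) (2 ^ k) y := by
      have := ih hw i.castSucc (Fin.last n)
      simpa using this (by simpa using hx1)
    have hyj : inBall G y (2 ^ k) (b j) := by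
      have := ih hw (Fin.last n) j.castSucc
      simpa using this (by simpa using hx2)
    rw [h2]
    exact inBall_trans hbiy hyj

lemma dwins_succ (G : SimpleGraph V) (col : V → κ → Prop) :
    ∀ (k : ℕ) {n : ℕ} {a b : Fin n → V}, DWinsLocal G col (k + 1) a b →
      DWinsLocal G col k a b := by
  intro k
  induction k with
  | zero =>
    intro n a b h i j
    obtain ⟨y, _, hp⟩ := h.1 (a i) ⟨i, inBall_refl G _ _⟩
    have := hp i.castSucc j.castSucc
    simpa using this
  | succ k ih =>
    intro n a b h
    have hpow : (2:ℕ) ^ k ≤ 2 ^ (k + 1) :=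
      Nat.pow_le_pow_right (by norm_num) (Nat.le_succ k)
    constructor
    · intro x hx
      obtain ⟨i, hi⟩ := hx
      obtain ⟨y, _, hw⟩ := h.1 x ⟨i, inBall_mono hpow hi⟩
      have hw' := ih hw
      refine ⟨y, ⟨i, ?_⟩, hw'⟩
      have := dwins_ball G col k hw' i.castSucc (Fin.last n) (by simpa using hi)
      simpa using this
    · intro y hy
      obtain ⟨i, hi⟩ := hy
      obtain ⟨x, _, hw⟩ := h.2 y ⟨i, inBall_mono hpow hi⟩
      have hw' := ih hw
      refine ⟨x, ⟨i, ?_⟩, hw'⟩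
      have := dwins_ball G col k (dwins_symm G col k hw') i.castSucc (Fin.last n)
        (by simpa using hi)
      simpa using this

lemma inBallT_append {G : SimpleGraph V} {m m' : ℕ} {a : Fin m → V} {a' : Fin m' → V}
    {r : ℕ} {x : V} :
    inBallT G (Fin.append a a') r x ↔ inBallT G a r x ∨ inBallT G a' r x := by
  constructor
  · rintro ⟨p, hp⟩
    obtain ⟨q, rfl⟩ := finSumFinEquiv.surjective p
    cases q with
    | inl i => exact Or.inl ⟨i, by simpa [Fin.append_left] using hp⟩
    | inr j => exact Or.inr ⟨j, by simpa [Fin.append_right] using hp⟩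
  · rintro (⟨i, h⟩ | ⟨j, h⟩)
    · exact ⟨Fin.castAdd _ i, by simpa [Fin.append_left] using h⟩
    · exact ⟨Fin.natAdd _ j, by simpa [Fin.append_right] using h⟩

lemma dwins_snoc_append (G : SimpleGraph V) (col : V → κ → Prop) (k : ℕ) {m m' : ℕ}
    (a b : Fin m → V) (a' b' : Fin m' → V) (x y : V) :
    DWinsLocal G col k (Fin.snoc (Fin.append a a') x) (Fin.snoc (Fin.append b b') y) ↔
      DWinsLocal G col k (Fin.append (Fin.snoc a x) a') (Fin.append (Fin.snoc b y) b') := by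
  set e₁ : Fin (m + m' + 1) → Fin (m + 1 + m') :=
    Fin.snoc (Fin.addCases (fun i : Fin m => Fin.castAdd m' i.castSucc) (Fin.natAdd (m+1)))
      (Fin.castAdd m' (Fin.last m)) with he₁
  set e₂ : Fin (m + 1 + m') → Fin (m + m' + 1) :=
    Fin.addCases
      (fun i : Fin (m+1) =>
        Fin.lastCases (Fin.last (m + m')) (fun i' => (Fin.castAdd m' i').castSucc) i)
      (fun j : Fin m' => (Fin.natAdd m j).castSucc) with he₂
  have hs₁ : Function.Surjective e₁ := by
    intro q
    induction q using Fin.addCases with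
    | left i =>
      induction i using Fin.lastCases with
      | last => exact ⟨Fin.last (m + m'), by simp [he₁]⟩
      | cast i' => exact ⟨(Fin.castAdd m' i').castSucc, by simp [he₁]⟩
    | right j => exact ⟨(Fin.natAdd m j).castSucc, by simp [he₁, -Fin.castSucc_natAdd]⟩
  have hs₂ : Function.Surjective e₂ := by
    intro p
    induction p using Fin.lastCases with
    | last => exact ⟨Fin.castAdd m' (Fin.last m), by simp [he₂]⟩
    | cast p' =>
      induction p' using Fin.addCases with
      | left i => exact ⟨Fin.castAdd m' i.castSucc, by simp [he₂]⟩
      | right j => exact ⟨Fin.natAdd (m+1) j, by simp [he₂]⟩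
  have hc₁ : ∀ (c : Fin m → V) (c' : Fin m' → V) (z : V),
      (Fin.append (Fin.snoc c z) c' : Fin (m + 1 + m') → V) ∘ e₁
        = Fin.snoc (Fin.append c c') z := by
    intro c c' z
    funext p
    induction p using Fin.lastCases with
    | last => simp [he₁]
    | cast p' =>
      induction p' using Fin.addCases with
      | left i => simp [he₁]
      | right j => simp [he₁, -Fin.castSucc_natAdd]
  have hc₂ : ∀ (c : Fin m → V) (c' : Fin m' → V) (z : V),
      (Fin.snoc (Fin.append c c') z : Fin (m + m' + 1) → V) ∘ e₂
        = Fin.append (Fin.snoc c z) c' := by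
    intro c c' z
    funext q
    induction q using Fin.addCases with
    | left i =>
      induction i using Fin.lastCases with
      | last => simp [he₂]
      | cast i' => simp [he₂]
    | right j => simp [he₂, -Fin.castSucc_natAdd]
  constructor
  · intro h
    have := dwins_reindex G col k e₂ hs₂ h
    rwa [hc₂ a a' x, hc₂ b b' y] at this
  · intro h
    have := dwins_reindex G col k e₁ hs₁ h
    rwa [hc₁ a a' x, hc₁ b b' y] at this

lemma dwins_snoc_append' (G : SimpleGraph V) (col : V → κ → Prop) (k : ℕ) {m m' : ℕ}
    (a b : Fin m → V) (a' b' : Fin m' → V) (x y : V) :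
    DWinsLocal G col k (Fin.snoc (Fin.append a a') x) (Fin.snoc (Fin.append b b') y) ↔
      DWinsLocal G col k (Fin.append a (Fin.snoc a' x)) (Fin.append b (Fin.snoc b' y)) := by
  set f₁ : Fin (m + m' + 1) → Fin (m + (m' + 1)) :=
    Fin.snoc (Fin.addCases (fun i : Fin m => Fin.castAdd (m'+1) i)
        (fun j : Fin m' => Fin.natAdd m j.castSucc))
      (Fin.natAdd m (Fin.last m')) with hf₁
  set f₂ : Fin (m + (m' + 1)) → Fin (m + m' + 1) :=
    Fin.addCases (fun i : Fin m => (Fin.castAdd m' i).castSucc)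
      (fun j : Fin (m'+1) =>
        Fin.lastCases (Fin.last (m + m')) (fun j' => (Fin.natAdd m j').castSucc) j) with hf₂
  have hs₁ : Function.Surjective f₁ := by
    intro q
    induction q using Fin.addCases with
    | left i => exact ⟨(Fin.castAdd m' i).castSucc, by simp [hf₁, -Fin.natAdd_last]⟩
    | right j =>
      induction j using Fin.lastCases with
      | last => exact ⟨Fin.last (m + m'), by simp [hf₁, -Fin.natAdd_last]⟩
      | cast j' => exact ⟨(Fin.natAdd m j').castSucc, by simp [hf₁, -Fin.natAdd_last, -Fin.castSucc_natAdd]⟩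
  have hs₂ : Function.Surjective f₂ := by
    intro p
    induction p using Fin.lastCases with
    | last => exact ⟨Fin.natAdd m (Fin.last m'), by simp [hf₂, -Fin.natAdd_last]⟩
    | cast p' =>
      induction p' using Fin.addCases with
      | left i => exact ⟨Fin.castAdd (m'+1) i, by simp [hf₂, -Fin.natAdd_last]⟩
      | right j => exact ⟨Fin.natAdd m j.castSucc, by simp [hf₂, -Fin.natAdd_last]⟩
  have hc₁ : ∀ (c : Fin m → V) (c' : Fin m' → V) (z : V),
      (Fin.append c (Fin.snoc c' z) : Fin (m + (m' + 1)) → V) ∘ f₁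
        = Fin.snoc (Fin.append c c') z := by
    intro c c' z
    funext p
    induction p using Fin.lastCases with
    | last => simp [hf₁, -Fin.natAdd_last]
    | cast p' =>
      induction p' using Fin.addCases with
      | left i => simp [hf₁, -Fin.natAdd_last]
      | right j => simp [hf₁, -Fin.natAdd_last, -Fin.castSucc_natAdd]
  have hc₂ : ∀ (c : Fin m → V) (c' : Fin m' → V) (z : V),
      (Fin.snoc (Fin.append c c') z : Fin (m + m' + 1) → V) ∘ f₂
        = Fin.append c (Fin.snoc c' z) := by
    intro c c' z
    funext q
    induction q using Fin.addCases with
    | left i => simp [hf₂, -Fin.natAdd_last]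
    | right j =>
      induction j using Fin.lastCases with
      | last => simp [hf₂, -Fin.natAdd_last]
      | cast j' => simp [hf₂, -Fin.natAdd_last, -Fin.castSucc_natAdd]
  constructor
  · intro h
    have := dwins_reindex G col k f₂ hs₂ h
    rwa [hc₂ a a' x, hc₂ b b' y] at this
  · intro h
    have := dwins_reindex G col k f₁ hs₁ h
    rwa [hc₁ a a' x, hc₁ b b' y] at this

theorem dWinsLocal_append_iff (G : SimpleGraph V) (col : V → κ → Prop)
    {m m' : ℕ} (a b : Fin m → V) (a' b' : Fin m' → V) (k : ℕ)
    (ha : ∀ i i', ¬ inBall G (a i) (2 ^ k) (a' i'))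
    (hb : ∀ i i', ¬ inBall G (b i) (2 ^ k) (b' i')) :
    DWinsLocal G col k (Fin.append a a') (Fin.append b b') ↔
      DWinsLocal G col k a b ∧ DWinsLocal G col k a' b' := by
  induction k generalizing m m' a b a' b' with
  | zero =>
    have h1 : (2:ℕ) ^ 0 = 1 := pow_zero 2
    rw [h1] at ha hb
    constructor
    · intro h
      refine ⟨fun i j => ?_, fun i j => ?_⟩
      · have := h (Fin.castAdd m' i) (Fin.castAdd m' j)
        simpa [Fin.append_left] using this
      · have := h (Fin.natAdd m i) (Fin.natAdd m j)
        simpa [Fin.append_right] using this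
    · rintro ⟨hab, hab'⟩ p q
      induction p using Fin.addCases with
      | left i =>
        induction q using Fin.addCases with
        | left j => simpa [Fin.append_left] using hab i j
        | right j =>
          simp only [Fin.append_left, Fin.append_right]
          refine ⟨⟨fun he => ?_, fun he => ?_⟩, fun c => (hab i i).2.1 c,
            ⟨fun he => ?_, fun he => ?_⟩⟩
          · exact absurd (inBall_of_eq he) (ha i j)
          · exact absurd (inBall_of_eq he) (hb i j)
          · exact absurd (inBall_one.2 (Or.inr he)) (ha i j)
          · exact absurd (inBall_one.2 (Or.inr he)) (hb i j)
      | right i =>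
        induction q using Fin.addCases with
        | left j =>
          simp only [Fin.append_left, Fin.append_right]
          refine ⟨⟨fun he => ?_, fun he => ?_⟩, fun c => (hab' i i).2.1 c,
            ⟨fun he => ?_, fun he => ?_⟩⟩
          · exact absurd (inBall_symm (inBall_of_eq he)) (ha j i)
          · exact absurd (inBall_symm (inBall_of_eq he)) (hb j i)
          · exact absurd (inBall_one.2 (Or.inr he.symm)) (ha j i)
          · exact absurd (inBall_one.2 (Or.inr he.symm)) (hb j i)
        | right j => simpa [Fin.append_right] using hab' i j
  | succ k ih =>
    have hpow : (2:ℕ) ^ k ≤ 2 ^ (k + 1) :=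
      Nat.pow_le_pow_right (by norm_num) (Nat.le_succ k)
    have h2 : (2:ℕ) ^ (k + 1) = 2 ^ k + 2 ^ k := by rw [pow_succ, mul_two]
    have ha1 : ∀ i i', ¬ inBall G (a i) (2 ^ k) (a' i') :=
      fun i i' h => ha i i' (inBall_mono hpow h)
    have hb1 : ∀ i i', ¬ inBall G (b i) (2 ^ k) (b' i') :=
      fun i i' h => hb i i' (inBall_mono hpow h)
    have combL : ∀ (x y : V), inBallT G a (2 ^ k) x → inBallT G b (2 ^ k) y →
        (DWinsLocal G col k (Fin.snoc (Fin.append a a') x) (Fin.snoc (Fin.append b b') y) ↔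
          DWinsLocal G col k (Fin.snoc a x) (Fin.snoc b y) ∧ DWinsLocal G col k a' b') := by
      rintro x y ⟨i0, hx⟩ ⟨j0, hy⟩
      rw [dwins_snoc_append]
      refine ih (Fin.snoc a x) (Fin.snoc b y) a' b' ?_ ?_
      · intro i i'
        induction i using Fin.lastCases with
        | last =>
          simp only [Fin.snoc_last]
          intro hcon
          exact ha i0 i' (by rw [h2]; exact inBall_trans hx hcon)
        | cast i => simpa using ha1 i i'
      · intro i i'
        induction i using Fin.lastCases with
        | last =>
          simp only [Fin.snoc_last]
          intro hcon
          exact hb j0 i' (by rw [h2]; exact inBall_trans hy hcon)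
        | cast i => simpa using hb1 i i'
    have combR : ∀ (x y : V), inBallT G a' (2 ^ k) x → inBallT G b' (2 ^ k) y →
        (DWinsLocal G col k (Fin.snoc (Fin.append a a') x) (Fin.snoc (Fin.append b b') y) ↔
          DWinsLocal G col k a b ∧ DWinsLocal G col k (Fin.snoc a' x) (Fin.snoc b' y)) := by
      rintro x y ⟨i0, hx⟩ ⟨j0, hy⟩
      rw [dwins_snoc_append']
      refine ih a b (Fin.snoc a' x) (Fin.snoc b' y) ?_ ?_
      · intro i i'
        induction i' using Fin.lastCases with
        | last =>
          simp only [Fin.snoc_last]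
          intro hcon
          exact ha i i0 (by rw [h2]; exact inBall_trans hcon (inBall_symm hx))
        | cast i' => simpa using ha1 i i'
      · intro i i'
        induction i' using Fin.lastCases with
        | last =>
          simp only [Fin.snoc_last]
          intro hcon
          exact hb i j0 (by rw [h2]; exact inBall_trans hcon (inBall_symm hy))
        | cast i' => simpa using hb1 i i'
    constructor
    · intro h
      refine ⟨⟨?_, ?_⟩, ?_, ?_⟩
      · intro x hx
        obtain ⟨i0, hxi⟩ := hx
        obtain ⟨y, hy, hw⟩ := h.1 x ⟨Fin.castAdd m' i0, by simpa [Fin.append_left] using hxi⟩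
        have hby : inBall G (b i0) (2 ^ k) y := by
          have := dwins_ball G col k hw (Fin.castAdd m' i0).castSucc (Fin.last _)
            (by simpa [Fin.append_left] using hxi)
          simpa [Fin.append_left] using this
        exact ⟨y, ⟨i0, hby⟩, ((combL x y ⟨i0, hxi⟩ ⟨i0, hby⟩).1 hw).1⟩
      · intro y hy
        obtain ⟨i0, hyi⟩ := hy
        obtain ⟨x, hx, hw⟩ := h.2 y ⟨Fin.castAdd m' i0, by simpa [Fin.append_left] using hyi⟩
        have hax : inBall G (a i0) (2 ^ k) x := by
          have := dwins_ball G col k (dwins_symm G col k hw)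
            (Fin.castAdd m' i0).castSucc (Fin.last _) (by simpa [Fin.append_left] using hyi)
          simpa [Fin.append_left] using this
        exact ⟨x, ⟨i0, hax⟩, ((combL x y ⟨i0, hax⟩ ⟨i0, hyi⟩).1 hw).1⟩
      · intro x hx
        obtain ⟨i0, hxi⟩ := hx
        obtain ⟨y, hy, hw⟩ := h.1 x ⟨Fin.natAdd m i0, by simpa [Fin.append_right] using hxi⟩
        have hby : inBall G (b' i0) (2 ^ k) y := by
          have := dwins_ball G col k hw (Fin.natAdd m i0).castSucc (Fin.last _)
            (by simpa [Fin.append_right, -Fin.castSucc_natAdd] using hxi)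
          simpa [Fin.append_right, -Fin.castSucc_natAdd] using this
        exact ⟨y, ⟨i0, hby⟩, ((combR x y ⟨i0, hxi⟩ ⟨i0, hby⟩).1 hw).2⟩
      · intro y hy
        obtain ⟨i0, hyi⟩ := hy
        obtain ⟨x, hx, hw⟩ := h.2 y ⟨Fin.natAdd m i0, by simpa [Fin.append_right] using hyi⟩
        have hax : inBall G (a' i0) (2 ^ k) x := by
          have := dwins_ball G col k (dwins_symm G col k hw)
            (Fin.natAdd m i0).castSucc (Fin.last _) (by simpa [Fin.append_right, -Fin.castSucc_natAdd] using hyi)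
          simpa [Fin.append_right, -Fin.castSucc_natAdd] using this
        exact ⟨x, ⟨i0, hax⟩, ((combR x y ⟨i0, hax⟩ ⟨i0, hyi⟩).1 hw).2⟩
    · rintro ⟨hab, hab'⟩
      constructor
      · intro x hx
        rcases inBallT_append.1 hx with ⟨i0, hxi⟩ | ⟨i0, hxi⟩
        · obtain ⟨y, hy, hw⟩ := hab.1 x ⟨i0, hxi⟩
          exact ⟨y, inBallT_append.2 (Or.inl hy),
            (combL x y ⟨i0, hxi⟩ hy).2 ⟨hw, dwins_succ G col k hab'⟩⟩
        · obtain ⟨y, hy, hw⟩ := hab'.1 x ⟨i0, hxi⟩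
          exact ⟨y, inBallT_append.2 (Or.inr hy),
            (combR x y ⟨i0, hxi⟩ hy).2 ⟨dwins_succ G col k hab, hw⟩⟩
      · intro y hy
        rcases inBallT_append.1 hy with ⟨i0, hyi⟩ | ⟨i0, hyi⟩
        · obtain ⟨x, hx, hw⟩ := hab.2 y ⟨i0, hyi⟩
          exact ⟨x, inBallT_append.2 (Or.inl hx),
            (combL x y hx ⟨i0, hyi⟩).2 ⟨hw, dwins_succ G col k hab'⟩⟩
        · obtain ⟨x, hx, hw⟩ := hab'.2 y ⟨i0, hyi⟩
          exact ⟨x, inBallT_append.2 (Or.inr hx),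
            (combR x y hx ⟨i0, hyi⟩).2 ⟨dwins_succ G col k hab, hw⟩⟩
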